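/- Suppose the margin condition P(|γ(X) − q| ≤ t) ≤ M t^α holds for all t > 0 and some constants M, α > 0. Let ĥ_q = 1{γ̂ > q̂} and h_q = 1{γ > q}. Then the excess classification error satisfies |P(C ≠ ĥ_q) − P(C ≠ h_q)| ≤ K (‖γ̂ − γ‖_∞ + |q̂ − q|)^α for a constant K depending only on M (and the fact that γ, q ∈ [0,1]). -/
import Mathlib


open MeasureTheory

/-- under a margin condition P(|γ(X) - q| ≤ t) ≤ M t^α, the excess error of
the plug-in quantile classifier is bounded by K (‖γ̂ - γ‖_∞ + |q̂ - q|)^α for a constant K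
depending only on M. -/
theorem plugin_quantile_excess_error_margin
    {Ω 𝓧 : Type*} [MeasurableSpace Ω] [MeasurableSpace 𝓧]
    (P : Measure Ω) [IsProbabilityMeasure P]
    (X : Ω → 𝓧) (hX : Measurable X)
    (γ : 𝓧 → ℝ) (hγ : Measurable γ) (hγ01 : ∀ x, γ x ∈ Set.Icc (0:ℝ) 1)
    (C : Ω → ℝ) (hC : Measurable C) (hCbin : ∀ ω, C ω = 0 ∨ C ω = 1)
    (hcond : ∀ B : Set 𝓧, MeasurableSet B →
      ∫ ω in X ⁻¹' B, C ω ∂P = ∫ ω in X ⁻¹' B, γ (X ω) ∂P)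
    (q : ℝ) (hq01 : q ∈ Set.Icc (0:ℝ) 1)
    (M α : ℝ) (hM : 0 < M) (hα : 0 < α)
    (hmargin : ∀ t : ℝ, 0 < t → (P {ω | |γ (X ω) - q| ≤ t}).toReal ≤ M * t ^ α) :
    ∃ K : ℝ, 0 < K ∧ ∀ (γhat : 𝓧 → ℝ), Measurable γhat → ∀ (qhat κ₁ : ℝ),
      (∀ x, |γhat x - γ x| ≤ κ₁) →
      |(P {ω | C ω ≠ (if γhat (X ω) > qhat then (1:ℝ) else 0)}).toReal
        - (P {ω | C ω ≠ (if γ (X ω) > q then (1:ℝ) else 0)}).toReal|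
        ≤ K * (κ₁ + |qhat - q|) ^ α := by
  refine ⟨M, hM, ?_⟩
  intro γhat hγhat qhat κ₁ hκ
  have hΩ : Nonempty Ω := by
    by_contra h
    rw [not_nonempty_iff] at h
    have h1 : P Set.univ = 1 := measure_univ
    rw [Set.univ_eq_empty_iff.mpr h, measure_empty] at h1
    exact zero_ne_one h1
  obtain ⟨ω₀⟩ := hΩ
  have hκ0 : 0 ≤ κ₁ := le_trans (abs_nonneg _) (hκ (X ω₀))
  set t := κ₁ + |qhat - q| with ht
  have ht0 : 0 ≤ t := by positivity
  set A := {ω | C ω ≠ (if γhat (X ω) > qhat then (1:ℝ) else 0)} with hA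
  set B := {ω | C ω ≠ (if γ (X ω) > q then (1:ℝ) else 0)} with hB
  set D := {ω | |γ (X ω) - q| ≤ t} with hD
  have key : ∀ ω, (ω ∈ A ∧ ω ∉ B) ∨ (ω ∉ A ∧ ω ∈ B) → ω ∈ D := by
    intro ω hω
    have hne : (if γhat (X ω) > qhat then (1:ℝ) else 0) ≠ (if γ (X ω) > q then (1:ℝ) else 0) := by
      rcases hω with ⟨h1, h2⟩ | ⟨h1, h2⟩
      · simp only [hA, hB, Set.mem_setOf_eq, not_not] at h1 h2
        rw [h2] at h1
        exact fun h => h1 h.symm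
      · simp only [hA, hB, Set.mem_setOf_eq, not_not] at h1 h2
        rw [h1] at h2
        exact fun h => h2 h
    have hg := abs_le.mp (hκ (X ω))
    have hqq1 : qhat - q ≤ |qhat - q| := le_abs_self _
    have hqq2 : q - qhat ≤ |qhat - q| := by rw [abs_sub_comm]; exact le_abs_self _
    simp only [hD, Set.mem_setOf_eq, abs_le]
    by_cases h1 : γhat (X ω) > qhat <;> by_cases h2 : γ (X ω) > q
    · simp [h1, h2] at hne
    · push_neg at h2
      constructor <;> linarith [hg.1, hg.2]
    · push_neg at h1
      constructor <;> linarith [hg.1, hg.2]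
    · simp [h1, h2] at hne
  have hAB : A ⊆ B ∪ D := by
    intro ω hω
    by_cases hωB : ω ∈ B
    · exact Or.inl hωB
    · exact Or.inr (key ω (Or.inl ⟨hω, hωB⟩))
  have hBA : B ⊆ A ∪ D := by
    intro ω hω
    by_cases hωA : ω ∈ A
    · exact Or.inl hωA
    · exact Or.inr (key ω (Or.inr ⟨hωA, hω⟩))
  have hfin : ∀ S : Set Ω, P S ≠ ⊤ := fun S => measure_ne_top P S
  have hbound : ∀ S T : Set Ω, S ⊆ T ∪ D →
      (P S).toReal ≤ (P T).toReal + (P D).toReal := by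
    intro S T hST
    have h : P S ≤ P T + P D := le_trans (measure_mono hST) (measure_union_le _ _)
    calc (P S).toReal ≤ ((P T) + (P D)).toReal :=
          ENNReal.toReal_mono (ENNReal.add_ne_top.mpr ⟨hfin T, hfin D⟩) h
      _ = (P T).toReal + (P D).toReal := ENNReal.toReal_add (hfin T) (hfin D)
  have habs : |(P A).toReal - (P B).toReal| ≤ (P D).toReal := by
    rw [abs_sub_le_iff]
    constructor
    · linarith [hbound A B hAB]
    · linarith [hbound B A hBA]
  rcases ht0.lt_or_eq with htpos | htzero
  · exact le_trans habs (hmargin t htpos)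
  · have hκ1 : κ₁ = 0 := by
      have := abs_nonneg (qhat - q); linarith
    have hq0 : |qhat - q| = 0 := by linarith
    have hqe : qhat = q := by
      have := abs_eq_zero.mp hq0; linarith
    have hγe : ∀ x, γhat x = γ x := by
      intro x
      have h1 : |γhat x - γ x| ≤ 0 := hκ1 ▸ hκ x
      have := abs_eq_zero.mp (le_antisymm h1 (abs_nonneg _))
      linarith
    have hABeq : A = B := by
      ext ω
      simp [hA, hB, hγe, hqe]
    rw [hABeq, sub_self, abs_zero, ← htzero, Real.zero_rpow hα.ne']
    simp
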